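/- Discrete-to-continuous universal simulation under smooth CDFs: Let {Δ_n} be non-increasing positive reals and {P_{X_n}} a sequence of Borel probability measures on ℝ whose CDFs F_{X_n} satisfy sup over x₁ with F_{X_n}(x₁+Δ_n) > F_{X_n}(x₁), sup over x ∈ (0, Δ_n] of |(F_{X_n}(x₁+x) − F_{X_n}(x₁))/(F_{X_n}(x₁+Δ_n) − F_{X_n}(x₁)) − x/Δ_n| → 0 as n → ∞. Then, with f_n(x) = G^{-1}((x − iΔ_n)/Δ_n) for x ∈ (iΔ_n, (i+1)Δ_n] and G the CDF of an arbitrary target Q_Y, the pushforwards satisfy |(f_n)_*P_{X_n} − Q_Y|_KS → 0. -/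

import Mathlib

open MeasureTheory Set Filter

noncomputable def cdfR (μ : Measure ℝ) (x : ℝ) : ℝ := (μ (Set.Iic x)).toReal

noncomputable def KSdist (μ ν : Measure ℝ) : ℝ := ⨆ x : ℝ, |cdfR μ x - cdfR ν x|

noncomputable def quantile (ν : Measure ℝ) (t : ℝ) : ℝ := sInf {y : ℝ | t ≤ cdfR ν y}

/-- The sawtooth simulator at scale `Δ`. -/
noncomputable def sawtooth (ν : Measure ℝ) (Δ : ℝ) (x : ℝ) : ℝ :=
  quantile ν ((x - ((⌈x / Δ⌉ : ℝ) - 1) * Δ) / Δ)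

namespace USim

lemma cdfR_eq_cdf (μ : Measure ℝ) [IsProbabilityMeasure μ] :
    cdfR μ = fun x => ProbabilityTheory.cdf μ x :=
  funext fun x => (ProbabilityTheory.cdf_eq_real μ x).symm

lemma cdfR_mono (μ : Measure ℝ) [IsFiniteMeasure μ] : Monotone (cdfR μ) := fun a b hab =>
  ENNReal.toReal_mono (measure_ne_top _ _) (measure_mono (Iic_subset_Iic.mpr hab))

lemma cdfR_nonneg (μ : Measure ℝ) (x : ℝ) : 0 ≤ cdfR μ x := ENNReal.toReal_nonneg

lemma cdfR_le_one (μ : Measure ℝ) [IsProbabilityMeasure μ] (x : ℝ) : cdfR μ x ≤ 1 := by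
  rw [cdfR_eq_cdf]; exact ProbabilityTheory.cdf_le_one _ _

lemma tendsto_cdfR_atBot (μ : Measure ℝ) [IsProbabilityMeasure μ] :
    Tendsto (cdfR μ) atBot (nhds 0) := by
  rw [cdfR_eq_cdf]; exact ProbabilityTheory.tendsto_cdf_atBot μ

lemma tendsto_cdfR_atTop (μ : Measure ℝ) [IsProbabilityMeasure μ] :
    Tendsto (cdfR μ) atTop (nhds 1) := by
  rw [cdfR_eq_cdf]; exact ProbabilityTheory.tendsto_cdf_atTop μ

lemma cdfR_right_tendsto (μ : Measure ℝ) [IsProbabilityMeasure μ] (y : ℝ) :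
    Tendsto (cdfR μ) (nhdsWithin y (Ioi y)) (nhds (cdfR μ y)) := by
  rw [cdfR_eq_cdf]
  exact ((ProbabilityTheory.cdf μ).right_continuous y).tendsto.mono_left
    (nhdsWithin_mono _ Ioi_subset_Ici_self)

lemma quantile_le_of_le (Q : Measure ℝ) [IsProbabilityMeasure Q] {t y : ℝ}
    (ht : 0 < t) (h : t ≤ cdfR Q y) : quantile Q t ≤ y := by
  obtain ⟨z, hz⟩ := eventually_atBot.mp ((tendsto_cdfR_atBot Q).eventually_lt_const ht)
  refine csInf_le ⟨z, fun s hs => ?_⟩ h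
  simp only [mem_setOf_eq] at hs
  by_contra hc
  push_neg at hc
  exact absurd hs (not_le.mpr (hz s hc.le))

lemma le_cdfR_of_quantile_le (Q : Measure ℝ) [IsProbabilityMeasure Q] {t y : ℝ}
    (ht0 : 0 < t) (ht1 : t < 1) (h : quantile Q t ≤ y) : t ≤ cdfR Q y := by
  have hS : {y : ℝ | t ≤ cdfR Q y}.Nonempty := by
    obtain ⟨z, hz⟩ := ((tendsto_cdfR_atTop Q).eventually_const_lt ht1).exists
    exact ⟨z, hz.le⟩
  have key : ∀ w ∈ Ioi y, t ≤ cdfR Q w := by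
    intro w hw
    obtain ⟨s, hsS, hsw⟩ := exists_lt_of_csInf_lt hS (lt_of_le_of_lt h hw)
    exact le_trans hsS (cdfR_mono Q hsw.le)
  exact ge_of_tendsto (cdfR_right_tendsto Q y) (eventually_nhdsWithin_of_forall key)

end USim


open MeasureTheory Set Filter
namespace USim2
variable {Δ : ℝ}

lemma ceil_eq (hΔ : 0 < Δ) {i : ℤ} {x : ℝ} (h1 : (i:ℝ)*Δ < x) (h2 : x ≤ (i:ℝ)*Δ + Δ) :
    ⌈x/Δ⌉ = i + 1 := by
  rw [Int.ceil_eq_iff]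
  constructor
  · push_cast
    rw [lt_div_iff₀ hΔ]
    linarith [add_sub_cancel_right (i:ℝ) 1]
  · push_cast
    rw [div_le_iff₀ hΔ]
    linarith

lemma cover (hΔ : 0 < Δ) : (⋃ i : ℤ, Ioc ((i:ℝ)*Δ) ((i:ℝ)*Δ + Δ)) = univ := by
  ext x
  simp only [mem_iUnion, mem_univ, iff_true, mem_Ioc]
  refine ⟨⌈x/Δ⌉ - 1, ?_, ?_⟩
  · have h1 : (⌈x/Δ⌉ : ℝ) < x/Δ + 1 := Int.ceil_lt_add_one _
    have h2 : x/Δ * Δ = x := div_mul_cancel₀ x hΔ.ne'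
    push_cast
    nlinarith
  · have h1 : x/Δ ≤ (⌈x/Δ⌉ : ℝ) := Int.le_ceil _
    have h2 : x/Δ * Δ = x := div_mul_cancel₀ x hΔ.ne'
    push_cast
    nlinarith

lemma pdisj (hΔ : 0 < Δ) {t : ℝ} (ht : t ≤ 1) :
    Pairwise (Function.onFun Disjoint fun i : ℤ => Ioc ((i:ℝ)*Δ) ((i:ℝ)*Δ + Δ*t)) := by
  have key : ∀ a b : ℤ, a < b →
      Disjoint (Ioc ((a:ℝ)*Δ) ((a:ℝ)*Δ + Δ*t)) (Ioc ((b:ℝ)*Δ) ((b:ℝ)*Δ + Δ*t)) := by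
    intro a b hab
    rw [Set.Ioc_disjoint_Ioc]
    have h1 : (a:ℝ) + 1 ≤ b := by exact_mod_cast hab
    have h2 : (a:ℝ)*Δ + Δ*t ≤ (b:ℝ)*Δ := by nlinarith
    exact le_trans (min_le_left _ _) (le_trans h2 (le_max_right _ _))
  intro i j hij
  rcases hij.lt_or_gt with h | h
  · exact key _ _ h
  · exact (key _ _ h).symm

lemma meas_Ioc (μ : Measure ℝ) [IsFiniteMeasure μ] {a b : ℝ} (hab : a ≤ b) :
    (μ (Ioc a b)).toReal = cdfR μ b - cdfR μ a := by
  have h2 : μ (Iic b) = μ (Iic a) + μ (Ioc a b) := by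
    rw [← Iic_union_Ioc_eq_Iic hab, measure_union (Iic_disjoint_Ioc le_rfl) measurableSet_Ioc]
  unfold cdfR
  rw [h2, ENNReal.toReal_add (measure_ne_top _ _) (measure_ne_top _ _)]
  ring

lemma meas_Ioc' (μ : Measure ℝ) [IsFiniteMeasure μ] {a b : ℝ} (hab : a ≤ b) :
    μ (Ioc a b) = ENNReal.ofReal (cdfR μ b - cdfR μ a) := by
  rw [← meas_Ioc μ hab, ENNReal.ofReal_toReal (measure_ne_top _ _)]

lemma sawtooth_apply (Q : Measure ℝ) (hΔ : 0 < Δ) {i : ℤ} {x : ℝ}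
    (h1 : (i:ℝ)*Δ < x) (h2 : x ≤ (i:ℝ)*Δ + Δ) :
    sawtooth Q Δ x = quantile Q ((x - (i:ℝ)*Δ)/Δ) := by
  unfold sawtooth
  rw [ceil_eq hΔ h1 h2]
  push_cast
  ring_nf

end USim2

namespace USim3
open USim USim2
open MeasureTheory Set Filter
variable {Δ : ℝ}

lemma sawtooth_preimage_Iic (Q : Measure ℝ) [IsProbabilityMeasure Q] (hΔ : 0 < Δ) (y : ℝ) :
    (sawtooth Q Δ) ⁻¹' (Iic y) =
      (⋃ i : ℤ, Ioc ((i:ℝ)*Δ) ((i:ℝ)*Δ + Δ * cdfR Q y)) ∪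
      (if quantile Q 1 ≤ y then ⋃ i : ℤ, {((i:ℝ)*Δ + Δ)} else ∅) := by
  ext x
  obtain ⟨i, hi1, hi2⟩ : ∃ i : ℤ, (i:ℝ)*Δ < x ∧ x ≤ (i:ℝ)*Δ + Δ := by
    have hc := cover (Δ := Δ) hΔ
    have hx : x ∈ ⋃ i : ℤ, Ioc ((i:ℝ)*Δ) ((i:ℝ)*Δ + Δ) := hc ▸ mem_univ x
    simpa [mem_iUnion, mem_Ioc] using hx
  have hsaw : sawtooth Q Δ x = quantile Q ((x - (i:ℝ)*Δ)/Δ) := sawtooth_apply Q hΔ hi1 hi2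
  set t' := (x - (i:ℝ)*Δ)/Δ with ht'def
  have ht'0 : 0 < t' := div_pos (by linarith) hΔ
  have ht'1 : t' ≤ 1 := by rw [ht'def, div_le_one hΔ]; linarith
  have huniq : ∀ j : ℤ, (j:ℝ)*Δ < x → x ≤ (j:ℝ)*Δ + Δ → j = i := by
    intro j hj1 hj2
    have e1 := ceil_eq hΔ hj1 hj2
    have e2 := ceil_eq hΔ hi1 hi2
    omega
  simp only [mem_preimage, mem_Iic, mem_union, mem_iUnion, mem_Ioc, mem_singleton_iff, hsaw]
  constructor
  · intro hq
    rcases eq_or_lt_of_le ht'1 with heq | hlt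
    · have hx : x = (i:ℝ)*Δ + Δ := by
        have h := heq
        rw [ht'def, div_eq_one_iff_eq hΔ.ne'] at h
        linarith
      right
      rw [if_pos (by rwa [heq] at hq)]
      exact mem_iUnion.mpr ⟨i, mem_singleton_iff.mpr hx⟩
    · left
      have hle : t' ≤ cdfR Q y := le_cdfR_of_quantile_le Q ht'0 hlt hq
      rw [ht'def, div_le_iff₀ hΔ] at hle
      exact ⟨i, hi1, by linarith [mul_comm (cdfR Q y) Δ]⟩
  · intro h
    rcases h with ⟨j, hj1, hj2⟩ | hgrid
    · have hG0 : 0 < cdfR Q y := by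
        by_contra hc
        push_neg at hc
        nlinarith
      have hGle1 : cdfR Q y ≤ 1 := cdfR_le_one Q y
      have hj2' : x ≤ (j:ℝ)*Δ + Δ := by nlinarith
      have hji : j = i := huniq j hj1 hj2'
      subst hji
      have hle : t' ≤ cdfR Q y := by
        rw [ht'def, div_le_iff₀ hΔ]
        linarith [mul_comm (cdfR Q y) Δ]
      exact quantile_le_of_le Q ht'0 hle
    · by_cases hq1 : quantile Q 1 ≤ y
      · rw [if_pos hq1] at hgrid
        simp only [mem_iUnion, mem_singleton_iff] at hgrid
        obtain ⟨j, hx⟩ := hgrid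
        have hji : j = i := huniq j (by nlinarith) (le_of_eq hx)
        subst hji
        have ht1 : t' = 1 := by
          rw [ht'def, hx]
          field_simp
          ring
        rw [ht1]
        exact hq1
      · rw [if_neg hq1] at hgrid
        exact absurd hgrid (notMem_empty x)

lemma sawtooth_measurable (Q : Measure ℝ) [IsProbabilityMeasure Q] (hΔ : 0 < Δ) :
    Measurable (sawtooth Q Δ) := by
  apply measurable_of_Iic
  intro y
  rw [sawtooth_preimage_Iic Q hΔ y]
  apply MeasurableSet.union
  · exact MeasurableSet.iUnion fun i => measurableSet_Ioc
  · split
    · exact MeasurableSet.iUnion fun i => measurableSet_singleton _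
    · exact MeasurableSet.empty

end USim3

namespace USim4
open USim USim2 USim3
open MeasureTheory Set Filter

lemma key (Δ : ℝ) (hΔ : 0 < Δ) (μ : Measure ℝ) [IsProbabilityMeasure μ]
    (Q : Measure ℝ) [IsProbabilityMeasure Q] (ε : ℝ) (hε : 0 ≤ ε)
    (h : ∀ x₁ : ℝ, cdfR μ x₁ < cdfR μ (x₁ + Δ) → ∀ x ∈ Ioc (0:ℝ) Δ,
      |(cdfR μ (x₁ + x) - cdfR μ x₁) / (cdfR μ (x₁ + Δ) - cdfR μ x₁) - x / Δ| ≤ ε) :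
    KSdist (μ.map (sawtooth Q Δ)) Q ≤ 2 * ε := by
  have hf : Measurable (sawtooth Q Δ) := sawtooth_measurable Q hΔ
  set W : ℤ → ℝ := fun i => cdfR μ ((i:ℝ)*Δ + Δ) - cdfR μ ((i:ℝ)*Δ) with hWdef
  have hW0 : ∀ i, 0 ≤ W i := fun i => sub_nonneg.mpr (cdfR_mono μ (by linarith))
  have hWin : ∀ i : ℤ, μ (Ioc ((i:ℝ)*Δ) ((i:ℝ)*Δ + Δ)) = ENNReal.ofReal (W i) := fun i =>
    meas_Ioc' μ (by linarith)
  have hdisj1 : Pairwise (Function.onFun Disjoint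
      fun i : ℤ => Ioc ((i:ℝ)*Δ) ((i:ℝ)*Δ + Δ)) := by
    have := pdisj hΔ (le_refl (1:ℝ))
    simpa [mul_one] using this
  have hsum1 : (∑' i : ℤ, ENNReal.ofReal (W i)) = 1 := by
    calc (∑' i : ℤ, ENNReal.ofReal (W i))
        = ∑' i : ℤ, μ (Ioc ((i:ℝ)*Δ) ((i:ℝ)*Δ + Δ)) := tsum_congr fun i => (hWin i).symm
      _ = μ (⋃ i : ℤ, Ioc ((i:ℝ)*Δ) ((i:ℝ)*Δ + Δ)) :=
          (measure_iUnion hdisj1 fun i => measurableSet_Ioc).symm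
      _ = 1 := by rw [cover hΔ, measure_univ]
  have hbound : ∀ y : ℝ, |cdfR (μ.map (sawtooth Q Δ)) y - cdfR Q y| ≤ 2*ε := by
    intro y
    set t := cdfR Q y with htdef
    have ht0 : 0 ≤ t := cdfR_nonneg Q y
    have ht1 : t ≤ 1 := cdfR_le_one Q y
    set S : ℤ → Set ℝ := fun i => Ioc ((i:ℝ)*Δ) ((i:ℝ)*Δ + Δ*t) with hSdef
    -- Claim A : upper bound per window
    have claimA : ∀ i : ℤ, μ (S i) ≤ ENNReal.ofReal ((t+ε) * W i) := by
      intro i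
      rcases eq_or_lt_of_le ht0 with h0 | h0
      · have hz : Δ * t = 0 := by rw [← h0, mul_zero]
        simp [hSdef, hz]
      rcases lt_or_ge (cdfR μ ((i:ℝ)*Δ)) (cdfR μ ((i:ℝ)*Δ + Δ)) with hWlt | hWle
      · have hb := h ((i:ℝ)*Δ) hWlt (Δ*t) ⟨by positivity, by nlinarith⟩
        have hdiv : Δ*t/Δ = t := by field_simp
        rw [hdiv] at hb
        have hWpos : 0 < W i := sub_pos.mpr hWlt
        have hmeas : (μ (S i)).toReal = cdfR μ ((i:ℝ)*Δ + Δ*t) - cdfR μ ((i:ℝ)*Δ) :=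
          meas_Ioc μ (by nlinarith)
        rw [← ENNReal.ofReal_toReal (measure_ne_top μ (S i)), hmeas]
        apply ENNReal.ofReal_le_ofReal
        have h2 : (cdfR μ ((i:ℝ)*Δ + Δ*t) - cdfR μ ((i:ℝ)*Δ)) / W i ≤ t + ε := by
          linarith [(abs_le.mp hb).2]
        exact (div_le_iff₀ hWpos).mp h2
      · have hWz : W i = 0 := le_antisymm (by simp only [hWdef]; linarith) (hW0 i)
        have hm : μ (S i) ≤ μ (Ioc ((i:ℝ)*Δ) ((i:ℝ)*Δ + Δ)) :=
          measure_mono (Ioc_subset_Ioc_right (by nlinarith))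
        rw [hWin i, hWz, ENNReal.ofReal_zero] at hm
        exact le_trans hm zero_le
    -- Claim B : lower bound per window
    have claimB : ∀ i : ℤ, ENNReal.ofReal (t * W i) ≤ μ (S i) + ENNReal.ofReal (ε * W i) := by
      intro i
      rcases eq_or_lt_of_le ht0 with h0 | h0
      · simp [← h0]
      rcases lt_or_ge (cdfR μ ((i:ℝ)*Δ)) (cdfR μ ((i:ℝ)*Δ + Δ)) with hWlt | hWle
      · have hb := h ((i:ℝ)*Δ) hWlt (Δ*t) ⟨by positivity, by nlinarith⟩
        have hdiv : Δ*t/Δ = t := by field_simp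
        rw [hdiv] at hb
        have hWpos : 0 < W i := sub_pos.mpr hWlt
        have h2 : t - ε ≤ (cdfR μ ((i:ℝ)*Δ + Δ*t) - cdfR μ ((i:ℝ)*Δ)) / W i := by
          linarith [(abs_le.mp hb).1]
        have h3 : (t - ε) * W i ≤ cdfR μ ((i:ℝ)*Δ + Δ*t) - cdfR μ ((i:ℝ)*Δ) :=
          (le_div_iff₀ hWpos).mp h2
        have hmS : μ (S i) = ENNReal.ofReal (cdfR μ ((i:ℝ)*Δ + Δ*t) - cdfR μ ((i:ℝ)*Δ)) :=
          meas_Ioc' μ (by nlinarith)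
        rw [hmS, ← ENNReal.ofReal_add (by
          have := cdfR_mono μ (show (i:ℝ)*Δ ≤ (i:ℝ)*Δ + Δ*t by nlinarith); linarith)
          (by positivity)]
        apply ENNReal.ofReal_le_ofReal
        nlinarith
      · have hWz : W i = 0 := le_antisymm (by simp only [hWdef]; linarith) (hW0 i)
        simp [hWz]
    -- Claim C : atoms at grid points are small
    have claimC : ∀ i : ℤ, μ {((i:ℝ)*Δ + Δ)} ≤ ENNReal.ofReal (ε * W i) := by
      intro i
      rcases lt_or_ge (cdfR μ ((i:ℝ)*Δ)) (cdfR μ ((i:ℝ)*Δ + Δ)) with hWlt | hWle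
      · have hWpos : 0 < W i := sub_pos.mpr hWlt
        rw [← ENNReal.ofReal_toReal (measure_ne_top μ _)]
        apply ENNReal.ofReal_le_ofReal
        apply le_of_forall_pos_le_add
        intro c hc
        set δ := min (Δ/2) (c*Δ/(W i + 1)) with hδdef
        have hδ0 : 0 < δ := lt_min (by linarith) (by positivity)
        have hδΔ : δ < Δ := lt_of_le_of_lt (min_le_left _ _) (by linarith)
        have hb := h ((i:ℝ)*Δ) hWlt (Δ - δ) ⟨by linarith, by linarith⟩
        have heq : (i:ℝ)*Δ + (Δ - δ) = (i:ℝ)*Δ + Δ - δ := by ring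
        rw [heq] at hb
        have habs := abs_le.mp hb
        have hsub : ({((i:ℝ)*Δ + Δ)} : Set ℝ) ⊆ Ioc ((i:ℝ)*Δ + Δ - δ) ((i:ℝ)*Δ + Δ) := by
          intro z hz
          rw [mem_singleton_iff] at hz
          subst hz
          exact ⟨by linarith, le_rfl⟩
        have hm : (μ {((i:ℝ)*Δ + Δ)}).toReal
            ≤ (μ (Ioc ((i:ℝ)*Δ + Δ - δ) ((i:ℝ)*Δ + Δ))).toReal :=
          ENNReal.toReal_mono (measure_ne_top _ _) (measure_mono hsub)
        rw [meas_Ioc μ (by linarith)] at hm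
        have h4 : ((Δ-δ)/Δ - ε) * W i ≤ cdfR μ ((i:ℝ)*Δ + Δ - δ) - cdfR μ ((i:ℝ)*Δ) := by
          rw [← le_div_iff₀ hWpos]
          linarith [habs.1]
        have hid : ((Δ-δ)/Δ) * W i = W i - (δ/Δ) * W i := by
          field_simp
        have h1 : δ * (W i + 1) ≤ c*Δ := by
          have := min_le_right (Δ/2) (c*Δ/(W i + 1))
          rw [le_div_iff₀ (by linarith : (0:ℝ) < W i + 1)] at this
          exact this
        have hδb : (δ/Δ) * W i ≤ c := by
          rw [div_mul_eq_mul_div, div_le_iff₀ hΔ]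
          nlinarith
        have hWeq : cdfR μ ((i:ℝ)*Δ + Δ) - cdfR μ ((i:ℝ)*Δ) = W i := rfl
        have hexp : ((Δ-δ)/Δ - ε) * W i = ((Δ-δ)/Δ) * W i - ε * W i := by ring
        nlinarith [hm, h4, hexp, hid, hδb, hWeq]
      · have hWz : W i = 0 := le_antisymm (by simp only [hWdef]; linarith) (hW0 i)
        have hm : μ {((i:ℝ)*Δ + Δ)} ≤ μ (Ioc ((i:ℝ)*Δ) ((i:ℝ)*Δ + Δ)) := by
          apply measure_mono
          intro z hz
          rw [mem_singleton_iff] at hz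
          subst hz
          exact ⟨by linarith, le_rfl⟩
        rw [hWin i, hWz, ENNReal.ofReal_zero] at hm
        exact le_trans hm zero_le
    -- measure of U
    have hdisjU := pdisj (Δ := Δ) hΔ ht1
    have hmU : μ (⋃ i : ℤ, S i) = ∑' i : ℤ, μ (S i) :=
      measure_iUnion hdisjU fun i => measurableSet_Ioc
    have hUupper : μ (⋃ i : ℤ, S i) ≤ ENNReal.ofReal (t+ε) := by
      rw [hmU]
      calc (∑' i : ℤ, μ (S i)) ≤ ∑' i : ℤ, ENNReal.ofReal ((t+ε) * W i) :=
            ENNReal.tsum_le_tsum claimA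
        _ = ∑' i : ℤ, ENNReal.ofReal (t+ε) * ENNReal.ofReal (W i) :=
            tsum_congr fun i => ENNReal.ofReal_mul (by linarith)
        _ = ENNReal.ofReal (t+ε) * ∑' i : ℤ, ENNReal.ofReal (W i) := ENNReal.tsum_mul_left
        _ = ENNReal.ofReal (t+ε) := by rw [hsum1, mul_one]
    have hUlower : ENNReal.ofReal t ≤ μ (⋃ i : ℤ, S i) + ENNReal.ofReal ε := by
      have h1 : ENNReal.ofReal t = ∑' i : ℤ, ENNReal.ofReal (t * W i) := by
        calc ENNReal.ofReal t = ENNReal.ofReal t * 1 := (mul_one _).symm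
          _ = ENNReal.ofReal t * ∑' i : ℤ, ENNReal.ofReal (W i) := by rw [hsum1]
          _ = ∑' i : ℤ, ENNReal.ofReal t * ENNReal.ofReal (W i) := ENNReal.tsum_mul_left.symm
          _ = ∑' i : ℤ, ENNReal.ofReal (t * W i) :=
              tsum_congr fun i => (ENNReal.ofReal_mul ht0).symm
      rw [h1]
      calc (∑' i : ℤ, ENNReal.ofReal (t * W i))
          ≤ ∑' i : ℤ, (μ (S i) + ENNReal.ofReal (ε * W i)) := ENNReal.tsum_le_tsum claimB
        _ = (∑' i : ℤ, μ (S i)) + ∑' i : ℤ, ENNReal.ofReal (ε * W i) := ENNReal.tsum_add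
        _ = μ (⋃ i : ℤ, S i) + ENNReal.ofReal ε := by
            rw [hmU]
            congr 1
            calc (∑' i : ℤ, ENNReal.ofReal (ε * W i))
                = ∑' i : ℤ, ENNReal.ofReal ε * ENNReal.ofReal (W i) :=
                  tsum_congr fun i => ENNReal.ofReal_mul hε
              _ = ENNReal.ofReal ε * ∑' i : ℤ, ENNReal.ofReal (W i) := ENNReal.tsum_mul_left
              _ = ENNReal.ofReal ε := by rw [hsum1, mul_one]
    have hGrid : μ (⋃ i : ℤ, {((i:ℝ)*Δ + Δ)}) ≤ ENNReal.ofReal ε := by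
      calc μ (⋃ i : ℤ, {((i:ℝ)*Δ + Δ)}) ≤ ∑' i : ℤ, μ {((i:ℝ)*Δ + Δ)} := measure_iUnion_le _
        _ ≤ ∑' i : ℤ, ENNReal.ofReal (ε * W i) := ENNReal.tsum_le_tsum claimC
        _ = ∑' i : ℤ, ENNReal.ofReal ε * ENNReal.ofReal (W i) :=
            tsum_congr fun i => ENNReal.ofReal_mul hε
        _ = ENNReal.ofReal ε * ∑' i : ℤ, ENNReal.ofReal (W i) := ENNReal.tsum_mul_left
        _ = ENNReal.ofReal ε := by rw [hsum1, mul_one]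
    -- preimage identity
    have hpre : (μ.map (sawtooth Q Δ)) (Iic y) = μ ((sawtooth Q Δ) ⁻¹' (Iic y)) :=
      Measure.map_apply hf measurableSet_Iic
    have hAupper : (μ.map (sawtooth Q Δ)) (Iic y)
        ≤ ENNReal.ofReal (t + ε) + ENNReal.ofReal ε := by
      rw [hpre, sawtooth_preimage_Iic Q hΔ y]
      refine le_trans (measure_union_le _ _) (add_le_add hUupper ?_)
      split
      · exact hGrid
      · simp
    have hAlower : ENNReal.ofReal t ≤ (μ.map (sawtooth Q Δ)) (Iic y) + ENNReal.ofReal ε := by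
      rw [hpre, sawtooth_preimage_Iic Q hΔ y]
      exact le_trans hUlower (add_le_add_left (measure_mono subset_union_left) _)
    have hfin : (μ.map (sawtooth Q Δ)) (Iic y) ≠ ⊤ := by
      have : IsProbabilityMeasure (μ.map (sawtooth Q Δ)) :=
        Measure.isProbabilityMeasure_map hf.aemeasurable
      exact measure_ne_top _ _
    have hd : cdfR (μ.map (sawtooth Q Δ)) y = ((μ.map (sawtooth Q Δ)) (Iic y)).toReal := rfl
    have hub : cdfR (μ.map (sawtooth Q Δ)) y ≤ t + 2*ε := by
      rw [hd]
      calc ((μ.map (sawtooth Q Δ)) (Iic y)).toReal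
          ≤ (ENNReal.ofReal (t+ε) + ENNReal.ofReal ε).toReal :=
            ENNReal.toReal_mono (by simp [ENNReal.add_ne_top]) hAupper
        _ = (t+ε) + ε := by
            rw [ENNReal.toReal_add ENNReal.ofReal_ne_top ENNReal.ofReal_ne_top,
              ENNReal.toReal_ofReal (by linarith), ENNReal.toReal_ofReal hε]
        _ = t + 2*ε := by ring
    have hlb : t - ε ≤ cdfR (μ.map (sawtooth Q Δ)) y := by
      have h2 : (ENNReal.ofReal t).toReal
          ≤ ((μ.map (sawtooth Q Δ)) (Iic y) + ENNReal.ofReal ε).toReal :=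
        ENNReal.toReal_mono (by simp [ENNReal.add_ne_top, hfin]) hAlower
      rw [ENNReal.toReal_ofReal ht0, ENNReal.toReal_add hfin ENNReal.ofReal_ne_top,
        ENNReal.toReal_ofReal hε] at h2
      rw [hd]
      linarith
    rw [abs_le]
    constructor <;> linarith
  unfold KSdist
  exact Real.iSup_le hbound (by positivity)

end USim4

/-- Discrete-to-continuous universal simulation under asymptotically smooth CDFs:
if on every width-`Δₙ` window where the CDF increases, the normalized CDF increment is
uniformly close to linear, then the KS error of the sawtooth simulator vanishes. -/
theorem universal_simulation_smooth_cdfs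
    (Δ : ℕ → ℝ) (hΔpos : ∀ n, 0 < Δ n) (hΔmono : ∀ m n, m ≤ n → Δ n ≤ Δ m)
    (P : ℕ → Measure ℝ) (hP : ∀ n, IsProbabilityMeasure (P n))
    (hsmooth : Tendsto (fun n =>
        ⨆ x₁ : {x₁ : ℝ // cdfR (P n) x₁ < cdfR (P n) (x₁ + Δ n)},
          ⨆ x : Set.Ioc (0 : ℝ) (Δ n),
            |(cdfR (P n) ((x₁ : ℝ) + (x : ℝ)) - cdfR (P n) (x₁ : ℝ)) /
                (cdfR (P n) ((x₁ : ℝ) + Δ n) - cdfR (P n) (x₁ : ℝ)) - (x : ℝ) / Δ n|)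
      atTop (nhds 0))
    (Q : Measure ℝ) [IsProbabilityMeasure Q] :
    Tendsto (fun n => KSdist ((P n).map (sawtooth Q (Δ n))) Q) atTop (nhds 0) := by
  set ε : ℕ → ℝ := fun n =>
      ⨆ x₁ : {x₁ : ℝ // cdfR (P n) x₁ < cdfR (P n) (x₁ + Δ n)},
        ⨆ x : Set.Ioc (0 : ℝ) (Δ n),
          |(cdfR (P n) ((x₁ : ℝ) + (x : ℝ)) - cdfR (P n) (x₁ : ℝ)) /
              (cdfR (P n) ((x₁ : ℝ) + Δ n) - cdfR (P n) (x₁ : ℝ)) - (x : ℝ) / Δ n| with hεdef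
  have hε0 : ∀ n, 0 ≤ ε n := fun n =>
    Real.iSup_nonneg fun x₁ => Real.iSup_nonneg fun x => abs_nonneg _
  have hext : ∀ n, ∀ x₁ : ℝ, cdfR (P n) x₁ < cdfR (P n) (x₁ + Δ n) →
      ∀ x ∈ Set.Ioc (0:ℝ) (Δ n),
      |(cdfR (P n) (x₁ + x) - cdfR (P n) x₁) /
          (cdfR (P n) (x₁ + Δ n) - cdfR (P n) x₁) - x / Δ n| ≤ ε n := by
    intro n x₁ h1 x hx
    haveI := hP n
    have key1 : ∀ (a : {z : ℝ // cdfR (P n) z < cdfR (P n) (z + Δ n)})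
        (b : Set.Ioc (0:ℝ) (Δ n)),
        |(cdfR (P n) ((a:ℝ) + (b:ℝ)) - cdfR (P n) (a:ℝ)) /
            (cdfR (P n) ((a:ℝ) + Δ n) - cdfR (P n) (a:ℝ)) - (b:ℝ) / Δ n| ≤ 1 := by
      intro a b
      have hW : 0 < cdfR (P n) ((a:ℝ) + Δ n) - cdfR (P n) (a:ℝ) := sub_pos.mpr a.2
      have hb1 : 0 < (b:ℝ) := b.2.1
      have hb2 : (b:ℝ) ≤ Δ n := b.2.2
      have hmono1 : cdfR (P n) (a:ℝ) ≤ cdfR (P n) ((a:ℝ)+(b:ℝ)) :=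
        USim.cdfR_mono _ (by linarith)
      have hmono2 : cdfR (P n) ((a:ℝ)+(b:ℝ)) ≤ cdfR (P n) ((a:ℝ)+Δ n) :=
        USim.cdfR_mono _ (by linarith)
      have hr0 : 0 ≤ (cdfR (P n) ((a:ℝ) + (b:ℝ)) - cdfR (P n) (a:ℝ)) /
          (cdfR (P n) ((a:ℝ) + Δ n) - cdfR (P n) (a:ℝ)) := div_nonneg (by linarith) hW.le
      have hr1 : (cdfR (P n) ((a:ℝ) + (b:ℝ)) - cdfR (P n) (a:ℝ)) /
          (cdfR (P n) ((a:ℝ) + Δ n) - cdfR (P n) (a:ℝ)) ≤ 1 :=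
        (div_le_one hW).mpr (by linarith)
      have hs0 : 0 ≤ (b:ℝ)/(Δ n) := div_nonneg hb1.le (hΔpos n).le
      have hs1 : (b:ℝ)/(Δ n) ≤ 1 := (div_le_one (hΔpos n)).mpr hb2
      rw [abs_le]
      constructor <;> linarith
    have step1 : |(cdfR (P n) (x₁ + x) - cdfR (P n) x₁) /
        (cdfR (P n) (x₁ + Δ n) - cdfR (P n) x₁) - x / Δ n|
        ≤ ⨆ b : Set.Ioc (0:ℝ) (Δ n),
          |(cdfR (P n) (((⟨x₁, h1⟩ : {z : ℝ // cdfR (P n) z < cdfR (P n) (z + Δ n)}):ℝ) + (b:ℝ))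
              - cdfR (P n) x₁) / (cdfR (P n) (x₁ + Δ n) - cdfR (P n) x₁) - (b:ℝ) / Δ n| :=
      le_ciSup (f := fun b : Set.Ioc (0:ℝ) (Δ n) =>
        |(cdfR (P n) (x₁ + (b:ℝ)) - cdfR (P n) x₁) /
            (cdfR (P n) (x₁ + Δ n) - cdfR (P n) x₁) - (b:ℝ) / Δ n|)
        ⟨1, by rintro _ ⟨b, rfl⟩; exact key1 ⟨x₁, h1⟩ b⟩ ⟨x, hx⟩
    refine step1.trans ?_
    exact le_ciSup (f := fun a : {z : ℝ // cdfR (P n) z < cdfR (P n) (z + Δ n)} =>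
        ⨆ b : Set.Ioc (0:ℝ) (Δ n),
          |(cdfR (P n) ((a:ℝ) + (b:ℝ)) - cdfR (P n) (a:ℝ)) /
              (cdfR (P n) ((a:ℝ) + Δ n) - cdfR (P n) (a:ℝ)) - (b:ℝ) / Δ n|)
      ⟨1, by rintro _ ⟨a, rfl⟩; exact Real.iSup_le (key1 a) zero_le_one⟩ ⟨x₁, h1⟩
  have hKSn : ∀ n, KSdist ((P n).map (sawtooth Q (Δ n))) Q ≤ 2 * ε n := by
    intro n
    haveI := hP n
    exact USim4.key (Δ n) (hΔpos n) (P n) Q (ε n) (hε0 n) (hext n)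
  have hnonneg : ∀ n, 0 ≤ KSdist ((P n).map (sawtooth Q (Δ n))) Q := fun n =>
    Real.iSup_nonneg fun x => abs_nonneg _
  have h2ε : Tendsto (fun n => 2 * ε n) atTop (nhds 0) := by
    have := hsmooth.const_mul (2:ℝ)
    simpa using this
  exact squeeze_zero hnonneg hKSn h2ε
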